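/- Let ψ ∈ Ω be continuously differentiable on (0,∞) with ψ(t) = ∫₀^t ψ'(s) ds for all t ≥ 0. Then the following three conditions are equivalent: (i) there exists a > 1 such that liminf_{t→∞} ψ(at)/ψ(t) = 1; (ii) for every a > 1, liminf_{t→∞} ψ(at)/ψ(t) = 1; (iii) liminf_{t→∞} t·ψ'(t)/ψ(t) = 0. -/

import Mathlib

open Filter Set Topology

private lemma liminf_eq_iff_freq {h : ℝ → ℝ} {c C : ℝ}
    (hlb : ∀ᶠ t in atTop, c ≤ h t) (hub : ∀ᶠ t in atTop, h t ≤ C) :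
    Filter.liminf h atTop = c ↔ ∀ ε > (0:ℝ), ∃ᶠ t in atTop, h t < c + ε := by
  have hb_ge : IsBoundedUnder (· ≥ ·) atTop h := isBoundedUnder_of_eventually_ge hlb
  have hb_le : IsBoundedUnder (· ≤ ·) atTop h := isBoundedUnder_of_eventually_le hub
  constructor
  · intro hl ε hε
    by_contra hcon
    rw [not_frequently] at hcon
    have hev : ∀ᶠ t in atTop, c + ε ≤ h t := hcon.mono fun t ht => not_lt.mp ht
    have := le_liminf_of_le hb_le.isCoboundedUnder_ge hev
    rw [hl] at this; linarith
  · intro hfreq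
    refine le_antisymm ?_ (le_liminf_of_le hb_le.isCoboundedUnder_ge hlb)
    refine le_of_forall_pos_le_add fun ε hε => ?_
    exact liminf_le_of_frequently_le ((hfreq ε hε).mono fun t ht => ht.le) hb_ge

/-- For `ψ ∈ Ω` continuously differentiable on `(0,∞)` with
`ψ t = ∫₀^t ψ'`, the conditions (i) `liminf ψ(at)/ψ(t) = 1` for some `a > 1`,
(ii) for every `a > 1`, and (iii) `liminf t ψ'(t)/ψ(t) = 0` are equivalent. -/
theorem stmt4
    (ψ ψ' : ℝ → ℝ)
    (hmono : MonotoneOn ψ (Set.Ici 0))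
    (hconc : ConcaveOn ℝ (Set.Ici 0) ψ)
    (hzero : ψ 0 = 0)
    (hnonneg : ∀ t ≥ (0:ℝ), 0 ≤ ψ t)
    (htop : Tendsto ψ atTop atTop)
    (hderiv : ∀ t ∈ Set.Ioi (0:ℝ), HasDerivAt ψ (ψ' t) t)
    (hcont : ContinuousOn ψ' (Set.Ioi 0))
    (hfund : ∀ t ≥ (0:ℝ), ψ t = ∫ s in (0:ℝ)..t, ψ' s) :
    ((∃ a > (1:ℝ), Filter.liminf (fun t => ψ (a * t) / ψ t) atTop = 1) ↔
      (∀ a > (1:ℝ), Filter.liminf (fun t => ψ (a * t) / ψ t) atTop = 1))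
    ∧
    ((∃ a > (1:ℝ), Filter.liminf (fun t => ψ (a * t) / ψ t) atTop = 1) ↔
      Filter.liminf (fun t => t * ψ' t / ψ t) atTop = 0) := by
  -- positivity of ψ on (0,∞)
  have hpos : ∀ t > (0:ℝ), 0 < ψ t := by
    intro t ht
    rcases (hnonneg t ht.le).lt_or_eq with h | h
    · exact h
    exfalso
    obtain ⟨T, hT0, hTt⟩ :=
      ((htop.eventually (eventually_gt_atTop (0:ℝ))).and (eventually_ge_atTop (t+1))).exists
    have hTpos : (0:ℝ) < T := by linarith
    have hab : (1 - t/T) + t/T = 1 := by ring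
    have key := hconc.2 (self_mem_Ici) (show T ∈ Ici (0:ℝ) from hTpos.le)
      (show (0:ℝ) ≤ 1 - t/T by
        have : t/T ≤ 1 := by rw [div_le_one hTpos]; linarith
        linarith)
      (show (0:ℝ) ≤ t/T from div_nonneg ht.le hTpos.le) hab
    have harg : (1 - t/T) • (0:ℝ) + (t/T) • T = t := by
      simp only [smul_eq_mul]
      field_simp
      ring
    rw [harg] at key
    simp only [smul_eq_mul, hzero, mul_zero, zero_add] at key
    have : 0 < t/T * ψ T := mul_pos (div_pos ht hTpos) hT0
    rw [← h] at key
    linarith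
  -- secant slopes of a concave function are antitone
  have hsec : ∀ {p x y : ℝ}, p ∈ Ici (0:ℝ) → x ∈ Ici (0:ℝ) → y ∈ Ici (0:ℝ) →
      x ≠ p → y ≠ p → x ≤ y →
      (ψ y - ψ p)/(y - p) ≤ (ψ x - ψ p)/(x - p) := by
    intro p x y hp hx hy hxp hyp hxy
    have h := hconc.neg.secant_mono hp hx hy hxp hyp hxy
    simp only [Pi.neg_apply] at h
    have h2 : -((ψ x - ψ p)/(x - p)) ≤ -((ψ y - ψ p)/(y - p)) := by
      refine le_of_eq_of_le ?_ (h.trans_eq ?_) <;> ring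
    linarith
  -- tangent line above the graph (at left point)
  have hT1 : ∀ x > (0:ℝ), ∀ y, x < y → ψ y - ψ x ≤ ψ' x * (y - x) := by
    intro x hx y hxy
    have hslope : (ψ y - ψ x)/(y - x) ≤ ψ' x := by
      have hd := hasDerivAt_iff_tendsto_slope.mp (hderiv x (mem_Ioi.mpr hx))
      have hd' : Tendsto (slope ψ x) (𝓝[>] x) (𝓝 (ψ' x)) :=
        hd.mono_left (nhdsWithin_mono x fun u hu => ne_of_gt hu)
      have hev : ∀ᶠ u in 𝓝[>] x, (ψ y - ψ x)/(y - x) ≤ slope ψ x u := by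
        filter_upwards [Ioo_mem_nhdsGT_of_mem (left_mem_Ico.mpr hxy)] with u hu
        rw [slope_def_field]
        exact hsec hx.le (show u ∈ Ici (0:ℝ) from (hx.trans hu.1).le)
          (show y ∈ Ici (0:ℝ) from (hx.trans hxy).le) (ne_of_gt hu.1) (ne_of_gt hxy) hu.2.le
      exact ge_of_tendsto hd' hev
    have : 0 < y - x := sub_pos.mpr hxy
    calc ψ y - ψ x = (ψ y - ψ x)/(y - x) * (y - x) := by field_simp
      _ ≤ ψ' x * (y - x) := by gcongr
  -- tangent line above the graph (at right point)
  have hT2 : ∀ x ≥ (0:ℝ), ∀ y, x < y → ψ' y * (y - x) ≤ ψ y - ψ x := by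
    intro x hx y hxy
    have hy : (0:ℝ) < y := lt_of_le_of_lt hx hxy
    have hslope : ψ' y ≤ (ψ y - ψ x)/(y - x) := by
      have hd := hasDerivAt_iff_tendsto_slope.mp (hderiv y (mem_Ioi.mpr hy))
      have hd' : Tendsto (slope ψ y) (𝓝[<] y) (𝓝 (ψ' y)) :=
        hd.mono_left (nhdsWithin_mono y fun u hu => ne_of_lt hu)
      have hev : ∀ᶠ u in 𝓝[<] y, slope ψ y u ≤ (ψ y - ψ x)/(y - x) := by
        filter_upwards [Ioo_mem_nhdsLT_of_mem (right_mem_Ioc.mpr hxy)] with u hu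
        rw [slope_def_field]
        have h := hsec (show y ∈ Ici (0:ℝ) from hy.le) (show x ∈ Ici (0:ℝ) from hx)
          (show u ∈ Ici (0:ℝ) from (hx.trans hu.1.le)) (ne_of_lt hxy) (ne_of_lt hu.2) hu.1.le
        have heq : (ψ x - ψ y)/(x - y) = (ψ y - ψ x)/(y - x) := by
          rw [← neg_div_neg_eq]; ring_nf
        linarith [heq ▸ h]
      exact le_of_tendsto hd' hev
    have : 0 < y - x := sub_pos.mpr hxy
    calc ψ' y * (y - x) ≤ (ψ y - ψ x)/(y - x) * (y - x) := by gcongr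
      _ = ψ y - ψ x := by field_simp
  -- nonnegativity of ψ'
  have hd_nonneg : ∀ t > (0:ℝ), 0 ≤ ψ' t := by
    intro t ht
    have h1 := hT1 t ht (t+1) (by linarith)
    have h2 : ψ t ≤ ψ (t+1) := hmono ht.le (by linarith : (0:ℝ) ≤ t+1) (by linarith)
    nlinarith
  -- g ≤ 1
  have hg_le : ∀ t > (0:ℝ), t * ψ' t ≤ ψ t := by
    intro t ht
    have := hT2 0 le_rfl t ht
    rw [hzero] at this; nlinarith
  set g : ℝ → ℝ := fun t => t * ψ' t / ψ t with hg_def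
  -- eventual bounds for g
  have hg_lb : ∀ᶠ t in atTop, (0:ℝ) ≤ g t := by
    filter_upwards [eventually_gt_atTop (0:ℝ)] with t ht
    exact div_nonneg (mul_nonneg ht.le (hd_nonneg t ht)) (hpos t ht).le
  have hg_ub : ∀ᶠ t in atTop, g t ≤ 1 := by
    filter_upwards [eventually_gt_atTop (0:ℝ)] with t ht
    exact (div_le_one (hpos t ht)).mpr (hg_le t ht)
  have charG : Filter.liminf g atTop = 0 ↔ ∀ ε > (0:ℝ), ∃ᶠ t in atTop, g t < ε := by
    rw [liminf_eq_iff_freq hg_lb hg_ub]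
    simp
  -- pointwise bounds for f_a
  have hf_ub : ∀ a > (1:ℝ), ∀ t > (0:ℝ), ψ (a*t) / ψ t ≤ 1 + (a-1) * g t := by
    intro a ha t ht
    have hpt := hpos t ht
    have h1 := hT1 t ht (a*t) (by nlinarith)
    rw [div_le_iff₀ hpt, hg_def]
    have : (1 + (a-1) * (t * ψ' t / ψ t)) * ψ t = ψ t + (a-1) * (t * ψ' t) := by
      field_simp
    rw [this]; nlinarith
  have hf_lb : ∀ a > (1:ℝ), ∀ t > (0:ℝ), 1 + (a-1)/a * g (a*t) ≤ ψ (a*t) / ψ t := by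
    intro a ha t ht
    have hpt := hpos t ht
    have hat : (0:ℝ) < a*t := by nlinarith
    have hpat := hpos (a*t) hat
    have h2 := hT2 t ht.le (a*t) (by nlinarith)
    have hmle : ψ t ≤ ψ (a*t) := hmono ht.le hat.le (by nlinarith)
    have hd := hd_nonneg (a*t) hat
    -- (a-1)/a * g (a*t) = (a-1) * t * ψ' (a*t) / ψ (a*t)
    have hgid : (a-1)/a * g (a*t) = (a-1) * t * ψ' (a*t) / ψ (a*t) := by
      rw [hg_def]
      field_simp
    have num_nonneg : 0 ≤ (a-1) * t * ψ' (a*t) :=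
      mul_nonneg (mul_nonneg (by linarith) ht.le) hd
    have key : (a-1) * t * ψ' (a*t) / ψ (a*t) ≤ (a-1) * t * ψ' (a*t) / ψ t :=
      div_le_div_of_nonneg_left num_nonneg hpt hmle
    have h3 : (a-1) * t * ψ' (a*t) ≤ ψ (a*t) - ψ t := by nlinarith
    have key2 : (a-1) * t * ψ' (a*t) / ψ t ≤ (ψ (a*t) - ψ t) / ψ t := by
      gcongr
    have e1 : (ψ (a*t) - ψ t) / ψ t = ψ (a*t) / ψ t - 1 := by field_simp
    rw [hgid]
    linarith
  have hf_ge1 : ∀ a > (1:ℝ), ∀ᶠ t in atTop, (1:ℝ) ≤ ψ (a*t) / ψ t := by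
    intro a ha
    filter_upwards [eventually_gt_atTop (0:ℝ)] with t ht
    have hat : (0:ℝ) < a*t := by nlinarith
    exact (one_le_div (hpos t ht)).mpr (hmono ht.le hat.le (by nlinarith))
  have charF : ∀ a > (1:ℝ),
      (Filter.liminf (fun t => ψ (a * t) / ψ t) atTop = 1 ↔
        ∀ ε > (0:ℝ), ∃ᶠ t in atTop, ψ (a*t) / ψ t < 1 + ε) := by
    intro a ha
    refine liminf_eq_iff_freq (hf_ge1 a ha) (C := a) ?_
    filter_upwards [eventually_gt_atTop (0:ℝ), hg_ub] with t ht hgt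
    calc ψ (a*t) / ψ t ≤ 1 + (a-1) * g t := hf_ub a ha t ht
      _ ≤ 1 + (a-1) * 1 := by nlinarith
      _ = a := by ring
  -- (iii) → (ii)
  have key1 : Filter.liminf g atTop = 0 →
      ∀ a > (1:ℝ), Filter.liminf (fun t => ψ (a * t) / ψ t) atTop = 1 := by
    intro hG a ha
    rw [charF a ha]
    intro ε hε
    have hfg := (charG.mp hG) (ε/(a-1)) (div_pos hε (by linarith))
    have := hfg.and_eventually (eventually_gt_atTop (0:ℝ))
    refine this.mono fun t ⟨h1, h2⟩ => ?_
    have h3 : (0:ℝ) < a - 1 := by linarith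
    have h4 : g t * (a-1) < ε := (lt_div_iff₀ h3).mp h1
    calc ψ (a*t) / ψ t ≤ 1 + (a-1) * g t := hf_ub a ha t h2
      _ < 1 + ε := by nlinarith
  -- (i) → (iii)
  have key2 : (∃ a > (1:ℝ), Filter.liminf (fun t => ψ (a * t) / ψ t) atTop = 1) →
      Filter.liminf g atTop = 0 := by
    rintro ⟨a, ha, hF⟩
    rw [charG]
    intro ε hε
    have hca : (0:ℝ) < (a-1)/a := div_pos (by linarith) (by linarith)
    have hfg := (charF a ha).mp hF ((a-1)/a * ε) (mul_pos hca hε)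
    have hfreq : ∃ᶠ t in atTop, g (a*t) < ε := by
      refine (hfg.and_eventually (eventually_gt_atTop (0:ℝ))).mono fun t ⟨h1, h2⟩ => ?_
      have hlb := hf_lb a ha t h2
      have : (a-1)/a * g (a*t) < (a-1)/a * ε := by linarith
      exact lt_of_mul_lt_mul_left this hca.le
    have hmap : Tendsto (fun t : ℝ => a * t) atTop atTop :=
      Tendsto.const_mul_atTop (by linarith : (0:ℝ) < a) tendsto_id
    exact hmap.frequently hfreq
  -- assemble
  refine ⟨⟨fun h a ha => key1 (key2 h) a ha, fun h => ⟨2, by norm_num, h 2 (by norm_num)⟩⟩,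
    ⟨key2, fun h => ⟨2, by norm_num, key1 h 2 (by norm_num)⟩⟩⟩
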